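/- Let m ≥ 1 be an integer, let e_1,…,e_{m+1} ∈ ℝ, let (u_{i,0}, u_{i,1}) ∈ ℝ² for i = 1,…,m+1, let Δ := {y ∈ ℝ : u_{i,0} + u_{i,1}·y > 0 for all i ∈ {1,…,m+1}}, and define H : Δ → ℝ by H(y) := Π_{i=1}^{m+1} (u_{i,0} + u_{i,1}·y)^{e_i} − 1 (real powers of positive bases). Then the set of non-degenerate roots of H in Δ (points y ∈ Δ with H(y) = 0 and H'(y) ≠ 0) has cardinality at most m + 1. -/

import Mathlib

open Polynomial Finset Set

theorem stmt10 (m : ℕ) (hm : 1 ≤ m)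
    (e : Fin (m + 1) → ℝ) (u0 u1 : Fin (m + 1) → ℝ)
    (Δ : Set ℝ) (hΔ : Δ = {y : ℝ | ∀ i, 0 < u0 i + u1 i * y})
    (H : ℝ → ℝ) (hH : H = fun y => (∏ i, (u0 i + u1 i * y) ^ (e i)) - 1) :
    {y : ℝ | y ∈ Δ ∧ H y = 0 ∧ deriv H y ≠ 0}.Finite ∧
      {y : ℝ | y ∈ Δ ∧ H y = 0 ∧ deriv H y ≠ 0}.ncard ≤ m + 1 := by
  classical
  set S : Set ℝ := {y : ℝ | y ∈ Δ ∧ H y = 0 ∧ deriv H y ≠ 0} with hS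
  set p : Polynomial ℝ := ∑ i, Polynomial.C (e i * u1 i) *
      ∏ j ∈ Finset.univ.erase i, (Polynomial.C (u0 j) + Polynomial.C (u1 j) * Polynomial.X)
    with hp
  set K : ℝ → ℝ := fun y => (∏ i, (u0 i + u1 i * y) ^ (e i)) / ∏ i, (u0 i + u1 i * y) with hK
  -- evaluation of p
  have hpev : ∀ y : ℝ, p.eval y =
      ∑ i, (e i * u1 i) * ∏ j ∈ Finset.univ.erase i, (u0 j + u1 j * y) := by
    intro y
    simp [hp, Polynomial.eval_finset_sum, Polynomial.eval_prod]
  -- derivative formula on Δ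
  have key : ∀ y ∈ Δ, HasDerivAt H (K y * p.eval y) y := by
    intro y hy
    rw [hΔ] at hy
    have hpos : ∀ i, 0 < u0 i + u1 i * y := hy
    have hfac : ∀ i : Fin (m + 1), HasDerivAt (fun z => (u0 i + u1 i * z) ^ (e i))
        (e i * (u0 i + u1 i * y) ^ (e i - 1) * u1 i) y := by
      intro i
      have hinner : HasDerivAt (fun z => u0 i + u1 i * z) (u1 i) y := by
        simpa using ((hasDerivAt_id y).const_mul (u1 i)).const_add (u0 i)
      have houter := Real.hasDerivAt_rpow_const (p := e i) (Or.inl (hpos i).ne')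
      exact (houter.comp y hinner)
    have hprod := HasDerivAt.fun_finsetProd (u := Finset.univ) (f := fun i z => (u0 i + u1 i * z) ^ (e i))
      (f' := fun i => e i * (u0 i + u1 i * y) ^ (e i - 1) * u1 i) (fun i _ => hfac i)
    have hsum : (∑ i, (∏ j ∈ Finset.univ.erase i, (u0 j + u1 j * y) ^ (e j)) •
        (e i * (u0 i + u1 i * y) ^ (e i - 1) * u1 i)) = K y * p.eval y := by
      rw [hpev, Finset.mul_sum]
      refine Finset.sum_congr rfl fun i _ => ?_
      have h1 : (u0 i + u1 i * y) ^ (e i - 1) =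
          (u0 i + u1 i * y) ^ (e i) / (u0 i + u1 i * y) := by
        rw [Real.rpow_sub (hpos i), Real.rpow_one]
      have h2 : (∏ j, (u0 j + u1 j * y) ^ (e j)) =
          (u0 i + u1 i * y) ^ (e i) * ∏ j ∈ Finset.univ.erase i, (u0 j + u1 j * y) ^ (e j) :=
        (Finset.mul_prod_erase Finset.univ _ (Finset.mem_univ i)).symm
      have h3 : (∏ j, (u0 j + u1 j * y)) =
          (u0 i + u1 i * y) * ∏ j ∈ Finset.univ.erase i, (u0 j + u1 j * y) :=
        (Finset.mul_prod_erase Finset.univ _ (Finset.mem_univ i)).symm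
      have hne : (u0 i + u1 i * y) ≠ 0 := (hpos i).ne'
      have hne2 : (∏ j ∈ Finset.univ.erase i, (u0 j + u1 j * y)) ≠ 0 :=
        Finset.prod_ne_zero_iff.2 fun j _ => (hpos j).ne'
      show (∏ j ∈ Finset.univ.erase i, (u0 j + u1 j * y) ^ (e j)) •
          (e i * (u0 i + u1 i * y) ^ (e i - 1) * u1 i)
        = ((∏ j, (u0 j + u1 j * y) ^ (e j)) / ∏ j, (u0 j + u1 j * y)) *
          (e i * u1 i * ∏ j ∈ Finset.univ.erase i, (u0 j + u1 j * y))
      rw [smul_eq_mul, h1, h2, h3]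
      generalize (∏ j ∈ Finset.univ.erase i, (u0 j + u1 j * y) ^ (e j)) = A
      generalize (∏ j ∈ Finset.univ.erase i, (u0 j + u1 j * y)) = B at hne2 ⊢
      field_simp
    have := hprod.sub_const 1
    rw [hsum] at this
    rw [hH]
    exact this
  have hKpos : ∀ y ∈ Δ, 0 < K y := by
    intro y hy
    rw [hΔ] at hy
    exact div_pos (Finset.prod_pos fun i _ => Real.rpow_pos_of_pos (hy i) _)
      (Finset.prod_pos fun i _ => hy i)
  -- case p = 0
  by_cases hp0 : p = 0
  · have hempty : S = ∅ := by
      ext y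
      simp only [hS, Set.mem_setOf_eq, Set.mem_empty_iff_false, iff_false, not_and]
      intro hy _
      have := (key y hy).deriv
      rw [hp0] at this
      simp at this
      simp [this]
    rw [hempty]
    simp
  -- case p ≠ 0
  · set R : Finset ℝ := p.roots.toFinset with hR
    have hRcard : R.card ≤ m := by
      have h1 : p.natDegree ≤ m := by
        rw [hp]
        refine Polynomial.natDegree_sum_le_of_forall_le _ _ fun i _ => ?_
        refine (Polynomial.natDegree_C_mul_le _ _).trans ?_
        refine (Polynomial.natDegree_prod_le _ _).trans ?_
        calc (∑ j ∈ Finset.univ.erase i,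
              (Polynomial.C (u0 j) + Polynomial.C (u1 j) * Polynomial.X).natDegree)
            ≤ ∑ _j ∈ Finset.univ.erase i, 1 := by
              refine Finset.sum_le_sum fun j _ => ?_
              refine (Polynomial.natDegree_add_le _ _).trans ?_
              simp only [Polynomial.natDegree_C]
              refine max_le (Nat.zero_le _) ?_
              exact (Polynomial.natDegree_C_mul_le _ _).trans (by simp)
          _ = m := by
              rw [Finset.sum_const, smul_eq_mul, mul_one, Finset.card_erase_of_mem (Finset.mem_univ i)]
              simp
      calc R.card ≤ Multiset.card p.roots := p.roots.toFinset_card_le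
        _ ≤ p.natDegree := Polynomial.card_roots' p
        _ ≤ m := h1
    set f : ℝ → WithBot ℝ := fun s => (R.filter (· < s)).max with hf
    set T : Finset (WithBot ℝ) := insert ⊥ (R.image ((↑) : ℝ → WithBot ℝ)) with hT
    have hmaps : ∀ s, f s ∈ T := by
      intro s
      show (R.filter (· < s)).max ∈ T
      rcases (R.filter (· < s)).eq_empty_or_nonempty with h | h
      · rw [h, Finset.max_empty]
        exact Finset.mem_insert_self _ _
      · have hmem := Finset.max'_mem _ h
        rw [← Finset.coe_max' h]
        exact Finset.mem_insert_of_mem (Finset.mem_image_of_mem _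
          (Finset.mem_of_mem_filter _ hmem))
    -- key ordering lemma
    have hord : ∀ a b : ℝ, a ∈ S → b ∈ S → a < b → f a < f b := by
      intro a b ha hb hab
      obtain ⟨haΔ, haH, _⟩ := ha
      obtain ⟨hbΔ, hbH, _⟩ := hb
      have hIcc : Set.Icc a b ⊆ Δ := by
        intro y hy
        rw [hΔ] at haΔ hbΔ ⊢
        intro i
        have h1 := haΔ i
        have h2 := hbΔ i
        rcases le_or_gt 0 (u1 i) with h | h
        · nlinarith [hy.1, hy.2]
        · nlinarith [hy.1, hy.2]
      have hcont : ContinuousOn H (Set.Icc a b) := fun y hy =>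
        ((key y (hIcc hy)).continuousAt).continuousWithinAt
      obtain ⟨c, hc, hdc⟩ := exists_deriv_eq_zero hab hcont (by rw [haH, hbH])
      have hcΔ : c ∈ Δ := hIcc ⟨hc.1.le, hc.2.le⟩
      have hcp : p.eval c = 0 := by
        have := (key c hcΔ).deriv
        rw [hdc] at this
        exact (mul_eq_zero.1 this.symm).resolve_left (hKpos c hcΔ).ne'
      have hcR : c ∈ R := by
        rw [hR, Multiset.mem_toFinset, Polynomial.mem_roots hp0]
        exact hcp
      have hlt : f a < (c : WithBot ℝ) := by
        show (R.filter (· < a)).max < (c : WithBot ℝ)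
        rcases (R.filter (· < a)).eq_empty_or_nonempty with h | h
        · rw [h, Finset.max_empty]
          exact WithBot.bot_lt_coe c
        · rw [← Finset.coe_max' h]
          have hmem := Finset.max'_mem _ h
          have hlt' : Finset.max' _ h < a := (Finset.mem_filter.1 hmem).2
          exact_mod_cast hlt'.trans hc.1
      have hle : (c : WithBot ℝ) ≤ f b := by
        show _ ≤ (R.filter (· < b)).max
        exact Finset.le_max (Finset.mem_filter.2 ⟨hcR, hc.2⟩)
      exact lt_of_lt_of_le hlt hle
    have hinj : Set.InjOn f S := by
      intro a ha b hb hfab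
      rcases lt_trichotomy a b with h | h | h
      · exact absurd hfab (hord a b ha hb h).ne
      · exact h
      · exact absurd hfab.symm (hord b a hb ha h).ne
    have himg : f '' S ⊆ (T : Set (WithBot ℝ)) := by
      rintro _ ⟨s, _, rfl⟩
      exact hmaps s
    have hfin : S.Finite :=
      Set.Finite.of_finite_image ((T : Set (WithBot ℝ)).toFinite.subset himg) hinj
    refine ⟨hfin, ?_⟩
    calc S.ncard = (f '' S).ncard := (Set.ncard_image_of_injOn hinj).symm
      _ ≤ (T : Set (WithBot ℝ)).ncard := Set.ncard_le_ncard himg (T : Set (WithBot ℝ)).toFinite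
      _ = T.card := Set.ncard_coe_finset T
      _ ≤ (R.image ((↑) : ℝ → WithBot ℝ)).card + 1 := Finset.card_insert_le _ _
      _ ≤ R.card + 1 := by gcongr; exact Finset.card_image_le
      _ ≤ m + 1 := by omega
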